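/- The map ST sending each p-ary bracketing t with occurrence number n to its insertion tuple in ℕ^n is injective. -/

import Mathlib

/-- p-ary bracketings: terms over one variable `x` with one p-ary operation symbol `ω`. -/
inductive Brack (p : ℕ) : Type
  | x : Brack p
  | node : (Fin p → Brack p) → Brack p

namespace Brack

/-- occurrence number: number of occurrences of ω -/
def occ {p : ℕ} : Brack p → ℕ
  | .x => 0
  | .node f => 1 + ∑ i, occ (f i)

/-- length: number of occurrences of x -/
def len {p : ℕ} : Brack p → ℕ
  | .x => 1
  | .node f => ∑ i, len (f i)

/-- evaluation of a bracketing in a groupoid, variables enumerated left-to-right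
starting at position `j`. -/
def evalFrom {p : ℕ} {A : Type*} (op : (Fin p → A) → A) (v : ℕ → A) :
    Brack p → ℕ → A
  | .x, j => v j
  | .node f, j =>
      op (fun i => evalFrom op v (f i)
        (j + ∑ k ∈ Finset.univ.filter (· < i), len (f k)))

/-- the term function induced by a bracketing -/
def eval {p : ℕ} {A : Type*} (op : (Fin p → A) → A) (t : Brack p) (v : ℕ → A) : A :=
  evalFrom op v t 0

/-- prefix word of a bracketing: `true` codes ω, `false` codes x -/
def word {p : ℕ} : Brack p → List Bool
  | .x => [false]
  | .node f => true :: (List.ofFn (fun i => word (f i))).flatten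

/-- auxiliary: scan a word, recording 1 + number of x's before each ω -/
def STaux : List Bool → ℕ → List ℕ
  | [], _ => []
  | true :: w, c => (c + 1) :: STaux w c
  | false :: w, c => STaux w (c + 1)

/-- insertion tuple of a bracketing: the i-th entry is one plus the number
of x's preceding the i-th occurrence of ω in the prefix notation -/
def ST {p : ℕ} (t : Brack p) : List ℕ := STaux (word t) 0

/-- replace the i-th (0-based) occurrence of x in `t` by `s` -/
def replaceLeaf {p : ℕ} : Brack p → ℕ → Brack p → Brack p
  | .x, i, s => if i = 0 then s else .x
  | .node f, i, s => .node (fun j =>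
      let off := ∑ k ∈ Finset.univ.filter (· < j), len (f k)
      if off ≤ i ∧ i < off + len (f j) then replaceLeaf (f j) (i - off) s else f j)

/-- β_i : insertion of ω x … x at the i-th (1-based) occurrence of x -/
def beta {p : ℕ} (i : ℕ) (t : Brack p) : Brack p :=
  replaceLeaf t (i - 1) (.node (fun _ => .x))

/-- left depth: depth of leftmost leaf (binary case) -/
def dl : Brack 2 → ℕ
  | .x => 0
  | .node f => dl (f 0) + 1

/-- right depth: depth of rightmost leaf (binary case) -/
def dr : Brack 2 → ℕ
  | .x => 0
  | .node f => dr (f 1) + 1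

/-- left factor of a binary bracketing -/
def leftF : Brack 2 → Brack 2
  | .x => .x
  | .node f => f 0

/-- whether a bracketing is the single variable x -/
def isX {p : ℕ} : Brack p → Bool
  | .x => true
  | .node _ => false

/-- number of pairs of eggs, i.e. subterm occurrences of ω x x (binary case) -/
def eggs : Brack 2 → ℕ
  | .x => 0
  | .node f => (if isX (f 0) && isX (f 1) then 1 else 0) + eggs (f 0) + eggs (f 1)

end Brack

/-- generalized Catalan numbers -/
def genCat (p : ℕ) : ℕ → ℕ
  | 0 => 1
  | n + 1 =>
      ∑ v ∈ (Finset.Nat.antidiagonalTuple p n).attach, ∏ k : Fin p, genCat p (v.1 k)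
  decreasing_by
    have hv := Finset.Nat.mem_antidiagonalTuple.mp v.2
    have hle : v.1 k ≤ n := by
      calc v.1 k ≤ ∑ i, v.1 i :=
            Finset.single_le_sum (fun i _ => Nat.zero_le _) (Finset.mem_univ k)
        _ = n := hv
    omega

/-- the set M(n,k,p) of weakly increasing n-tuples of positive integers
with u_i ≤ (p-1)(i-1)+k (here indices are 0-based) -/
def Mset (n k p : ℕ) : Set (Fin n → ℕ) :=
  {u | (∀ i : Fin n, 1 ≤ u i ∧ u i ≤ (p - 1) * (i : ℕ) + k) ∧
    ∀ i j : Fin n, i ≤ j → u i ≤ u j}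

namespace Brack

lemma STaux_mem : ∀ (w : List Bool) (c a : ℕ), a ∈ STaux w c → c + 1 ≤ a := by
  intro w
  induction w with
  | nil => intro c a h; simp [STaux] at h
  | cons b v ih =>
    intro c a h
    cases b with
    | true =>
      simp only [STaux, List.mem_cons] at h
      rcases h with rfl | h
      · exact le_refl _
      · exact ih c a h
    | false =>
      simp only [STaux] at h
      exact le_trans (by omega) (ih (c + 1) a h)

lemma STaux_length : ∀ (w : List Bool) (c : ℕ),
    (STaux w c).length = w.count true := by
  intro w
  induction w with
  | nil => intro c; simp [STaux]
  | cons b v ih =>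
    intro c
    cases b <;> simp [STaux, ih, List.count_cons]

lemma STaux_inj : ∀ (w w' : List Bool) (c : ℕ),
    w.count false = w'.count false → STaux w c = STaux w' c → w = w' := by
  intro w
  induction w with
  | nil =>
    intro w' c hcf h
    cases w' with
    | nil => rfl
    | cons b v =>
      cases b with
      | true => simp [STaux] at h
      | false => simp [List.count_cons] at hcf
  | cons b v ih =>
    intro w' c hcf h
    cases b with
    | true =>
      cases w' with
      | nil => simp [STaux] at h
      | cons b' v' =>
        cases b' with
        | true =>
          simp only [STaux, List.cons.injEq] at h
          simp only [List.count_cons] at hcf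
          have := ih v' c (by omega) h.2
          rw [this]
        | false =>
          simp only [STaux] at h
          have : c + 1 ∈ STaux v' (c + 1) := by rw [← h]; simp
          have := STaux_mem _ _ _ this
          omega
    | false =>
      cases w' with
      | nil =>
        simp at hcf
      | cons b' v' =>
        cases b' with
        | true =>
          simp only [STaux] at h
          have : c + 1 ∈ STaux v (c + 1) := by rw [h]; simp
          have := STaux_mem _ _ _ this
          omega
        | false =>
          simp only [STaux] at h
          simp only [List.count_cons] at hcf
          have := ih v' (c + 1) (by omega) h
          rw [this]

lemma word_chain {p : ℕ} (f g : Fin p → Brack p)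
    (ih : ∀ i s l l', word (f i) ++ l = word s ++ l' → f i = s ∧ l = l') :
    ∀ (is : List (Fin p)) (l l' : List Bool),
      (is.map (fun i => word (f i))).flatten ++ l
        = (is.map (fun i => word (g i))).flatten ++ l' →
      (∀ i ∈ is, f i = g i) ∧ l = l' := by
  intro is
  induction is with
  | nil => intro l l' h; simpa using h
  | cons i is ihl =>
    intro l l' h
    simp only [List.map_cons, List.flatten_cons, List.append_assoc] at h
    obtain ⟨h1, h2⟩ := ih i (g i) _ _ h
    obtain ⟨h3, h4⟩ := ihl _ _ h2
    refine ⟨?_, h4⟩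
    intro j hj
    rcases List.mem_cons.mp hj with rfl | hj
    · exact h1
    · exact h3 j hj

lemma word_prefix {p : ℕ} : ∀ (t s : Brack p) (l l' : List Bool),
    word t ++ l = word s ++ l' → t = s ∧ l = l' := by
  intro t
  induction t with
  | x =>
    intro s l l' h
    cases s with
    | x => simp only [word, List.cons_append, List.nil_append, List.cons.injEq] at h; exact ⟨rfl, h.2⟩
    | node g => simp [word] at h
  | node f ih =>
    intro s l l' h
    cases s with
    | x => simp [word] at h
    | node g =>
      simp only [word, List.cons_append, List.cons.injEq] at h
      rw [List.ofFn_eq_map, List.ofFn_eq_map] at h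
      have h' := h.2
      try simp only [Function.comp] at h'
      obtain ⟨h3, h4⟩ := word_chain f g ih (List.finRange p) l l' h'
      refine ⟨?_, h4⟩
      congr 1
      funext i
      exact h3 i (List.mem_finRange i)

lemma count_false_word {p : ℕ} : ∀ t : Brack p, (word t).count false = len t := by
  intro t
  induction t with
  | x => simp [word, len]
  | node f ih =>
    simp only [word, len, List.count_cons, List.count_flatten]
    simp only [List.map_ofFn, List.sum_ofFn, Function.comp]
    simp [ih]

lemma count_true_word {p : ℕ} : ∀ t : Brack p, (word t).count true = occ t := by
  intro t
  induction t with
  | x => simp [word, occ]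
  | node f ih =>
    simp only [word, occ, List.count_cons, List.count_flatten]
    simp only [List.map_ofFn, List.sum_ofFn, Function.comp]
    simp [ih, add_comm]

lemma len_eq_occ {p : ℕ} (hp : 1 ≤ p) : ∀ t : Brack p, len t = (p - 1) * occ t + 1 := by
  intro t
  induction t with
  | x => simp [len, occ]
  | node f ih =>
    simp only [len, occ]
    calc ∑ i, len (f i) = ∑ i, ((p - 1) * occ (f i) + 1) := Finset.sum_congr rfl (fun i _ => ih i)
      _ = (p - 1) * ∑ i, occ (f i) + p := by
          rw [Finset.sum_add_distrib, ← Finset.mul_sum]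
          simp
      _ = (p - 1) * (1 + ∑ i, occ (f i)) + 1 := by
          rw [Nat.mul_add, Nat.mul_one]
          omega

end Brack

theorem stmt_7 (p : ℕ) (hp : 2 ≤ p) :
    Function.Injective (Brack.ST (p := p)) := by
  intro t s h
  unfold Brack.ST at h
  have hlen : (Brack.word t).count true = (Brack.word s).count true := by
    have := congrArg List.length h
    rwa [Brack.STaux_length, Brack.STaux_length] at this
  have hocc : Brack.occ t = Brack.occ s := by
    rwa [Brack.count_true_word, Brack.count_true_word] at hlen
  have hcf : (Brack.word t).count false = (Brack.word s).count false := by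
    rw [Brack.count_false_word, Brack.count_false_word,
      Brack.len_eq_occ (by omega) t, Brack.len_eq_occ (by omega) s, hocc]
  have hw : Brack.word t = Brack.word s := Brack.STaux_inj _ _ 0 hcf h
  have := Brack.word_prefix t s [] [] (by simp [hw])
  exact this.1
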